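/- arXiv:1304.0661 — 4 statements merged into one kernel-verified Lean document; each statement's English description precedes it below -/
import Mathlib

section
/- For all n ≥ 3, Δ₁(2n+1) ≡ 0 (mod 3), where Δ₁(n) is the number of broken 1-diamond partitions of n. -/
open PowerSeries Finset

/-- Truncated (up to degree `N`) version of the generating function
`(-q;q)_∞ / ((q;q)²_∞ (-q^{2k+1};q^{2k+1})_∞)` for broken `k`-diamond partitions.
Factors of index larger than `N` do not affect coefficients up to `q^N`. -/
noncomputable def brokenDiamondGF (k N : ℕ) : PowerSeries ℤ :=
  (∏ i ∈ range (N + 1), (1 + (X : PowerSeries ℤ) ^ (i + 1))) *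
    PowerSeries.invOfUnit
      ((∏ i ∈ range (N + 1), (1 - (X : PowerSeries ℤ) ^ (i + 1))) ^ 2 *
        ∏ i ∈ range (N + 1), (1 + (X : PowerSeries ℤ) ^ ((2 * k + 1) * (i + 1)))) 1

/-- `Δ k n`: the number of broken `k`-diamond partitions of `n`, i.e. the coefficient
of `q^n` in `(-q;q)_∞ / ((q;q)²_∞ (-q^{2k+1};q^{2k+1})_∞)`. -/
noncomputable def Δ (k n : ℕ) : ℤ :=
  PowerSeries.coeff n (brokenDiamondGF k n)

/-- `ψ(q) = Σ_{m≥0} q^{m(m+1)/2}`, the generating function for triangular numbers. -/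
noncomputable def psi : PowerSeries ℤ :=
  PowerSeries.mk fun n => open scoped Classical in if ∃ m : ℕ, m * (m + 1) / 2 = n then 1 else 0

/-- Substitution `q ↦ q^k` in a formal power series. -/
noncomputable def substPow (k : ℕ) (f : PowerSeries ℤ) : PowerSeries ℤ :=
  PowerSeries.mk fun n => if k ∣ n then PowerSeries.coeff (n / k) f else 0

lemma two_ne_zero'' : (2 : ZMod 3) ≠ 0 := by decide

lemma three_eq_zero' : (3 : PowerSeries (ZMod 3)) = 0 := by
  have h := map_natCast (C : ZMod 3 →+* PowerSeries (ZMod 3)) 3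
  push_cast at h
  rw [← h, show ((3:ZMod 3)) = 0 from rfl, map_zero]

lemma rescale_neg_one_X_pow_even (m : ℕ) (hm : Even m) :
    rescale (-1 : ZMod 3) ((X : PowerSeries (ZMod 3)) ^ m) = X ^ m := by
  ext n
  simp only [coeff_rescale, coeff_X_pow]
  by_cases h : n = m
  · subst h; simp [hm.neg_one_pow]
  · simp [h]

theorem delta1_odd_mod_three : ∀ n : ℕ, 3 ≤ n → (3 : ℤ) ∣ Δ 1 (2 * n + 1) := by
  intro n _
  set d : ℕ := 2 * n + 1 with hd
  suffices hfin : ((Δ 1 d : ℤ) : ZMod 3) = 0 by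
    exact_mod_cast (ZMod.intCast_zmod_eq_zero_iff_dvd _ 3).mp hfin
  -- pass to ZMod 3
  set M : ℕ := d + 1 with hM
  set A : PowerSeries ℤ := ∏ i ∈ range M, (1 + (X : PowerSeries ℤ) ^ (i + 1)) with hA
  set B : PowerSeries ℤ :=
      (∏ i ∈ range M, (1 - (X : PowerSeries ℤ) ^ (i + 1))) ^ 2 *
        ∏ i ∈ range M, (1 + (X : PowerSeries ℤ) ^ ((2 * 1 + 1) * (i + 1))) with hB
  have hGF : brokenDiamondGF 1 d = A * invOfUnit B 1 := rfl
  have hBc : constantCoeff B = (1 : ℤˣ) := by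
    rw [hB]
    simp [map_prod, map_pow, zero_pow]
  have hGB : brokenDiamondGF 1 d * B = A := by
    rw [hGF, mul_assoc, mul_comm (invOfUnit B 1) B, mul_invOfUnit B 1 hBc, mul_one]
  -- map everything to ZMod 3
  set φ : PowerSeries ℤ →+* PowerSeries (ZMod 3) := PowerSeries.map (Int.castRingHom (ZMod 3)) with hφ
  set S : PowerSeries (ZMod 3) := φ (brokenDiamondGF 1 d) with hS
  have hcoeff : ((Δ 1 d : ℤ) : ZMod 3) = coeff d S := by
    rw [hS, hφ, coeff_map]; rfl
  rw [hcoeff]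
  -- series over ZMod 3
  set a : PowerSeries (ZMod 3) := ∏ i ∈ range M, (1 + (X : PowerSeries (ZMod 3)) ^ (i + 1)) with ha
  set c : PowerSeries (ZMod 3) := ∏ i ∈ range M, (1 - (X : PowerSeries (ZMod 3)) ^ (i + 1)) with hc
  set dd : PowerSeries (ZMod 3) := ∏ i ∈ range M, (1 + (X : PowerSeries (ZMod 3)) ^ (3 * (i + 1))) with hdd
  set E : PowerSeries (ZMod 3) := ∏ i ∈ range M, (1 - (X : PowerSeries (ZMod 3)) ^ (2 * (i + 1))) with hE
  set g : PowerSeries (ZMod 3) := ∏ i ∈ range M, (1 - (X : PowerSeries (ZMod 3)) ^ (3 * (i + 1))) with hg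
  set H : PowerSeries (ZMod 3) := ∏ i ∈ range M, (1 - (X : PowerSeries (ZMod 3)) ^ (6 * (i + 1))) with hH
  have hφA : φ A = a := by
    rw [hA, ha, map_prod]
    refine prod_congr rfl fun i _ => ?_
    simp [hφ]
  have hφB : φ B = c ^ 2 * dd := by
    rw [hB, map_mul, map_pow, map_prod, map_prod, hc, hdd]
    congr 1
    · congr 1
      refine prod_congr rfl fun i _ => ?_
      simp [hφ]
    · refine prod_congr rfl fun i _ => ?_
      simp [hφ]
  have hSB : S * (c ^ 2 * dd) = a := by
    rw [hS, ← hφA, ← hφB, ← map_mul, hGB]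
  -- algebraic identities
  have hc3 : c ^ 3 = g := by
    rw [hc, hg, ← prod_pow]
    refine prod_congr rfl fun i _ => ?_
    have h3 := three_eq_zero'
    have hx : (X : PowerSeries (ZMod 3)) ^ (3 * (i + 1)) = ((X : PowerSeries (ZMod 3)) ^ (i + 1)) ^ 3 := by
      rw [← pow_mul, Nat.mul_comm]
    rw [hx]
    set x := (X : PowerSeries (ZMod 3)) ^ (i + 1)
    linear_combination (x ^ 2 - x) * h3
  have hac : a * c = E := by
    rw [ha, hc, hE, ← prod_mul_distrib]
    refine prod_congr rfl fun i _ => ?_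
    have hx : (X : PowerSeries (ZMod 3)) ^ (2 * (i + 1)) = ((X : PowerSeries (ZMod 3)) ^ (i + 1)) ^ 2 := by
      rw [← pow_mul, Nat.mul_comm]
    rw [hx]; ring
  have hgd : g * dd = H := by
    rw [hg, hdd, hH, ← prod_mul_distrib]
    refine prod_congr rfl fun i _ => ?_
    have hx : (X : PowerSeries (ZMod 3)) ^ (6 * (i + 1)) = ((X : PowerSeries (ZMod 3)) ^ (3 * (i + 1))) ^ 2 := by
      rw [← pow_mul]; ring_nf
    rw [hx]; ring
  have key : S * H = E := by
    calc S * H = S * (c ^ 2 * dd) * c := by rw [← hgd, ← hc3]; ring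
    _ = a * c := by rw [hSB]
    _ = E := hac
  -- rescale (-1) fixes E and H
  have hrE : rescale (-1 : ZMod 3) E = E := by
    rw [hE, map_prod]
    refine prod_congr rfl fun i _ => ?_
    rw [map_sub, map_one, rescale_neg_one_X_pow_even _ ⟨i + 1, by ring⟩]
  have hrH : rescale (-1 : ZMod 3) H = H := by
    rw [hH, map_prod]
    refine prod_congr rfl fun i _ => ?_
    rw [map_sub, map_one, rescale_neg_one_X_pow_even _ ⟨3 * (i + 1), by ring⟩]
  -- cancel H
  haveI : Fact (Nat.Prime 3) := ⟨by norm_num⟩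
  have hHne : H ≠ 0 := by
    intro h0
    have hone : constantCoeff H = 1 := by
      rw [hH]; simp [map_prod, zero_pow]
    rw [h0, map_zero] at hone
    exact zero_ne_one hone
  have hrS : rescale (-1 : ZMod 3) S = S := by
    have heq : rescale (-1 : ZMod 3) S * H = S * H := by
      calc rescale (-1 : ZMod 3) S * H
          = rescale (-1 : ZMod 3) S * rescale (-1 : ZMod 3) H := by rw [hrH]
        _ = rescale (-1 : ZMod 3) (S * H) := (map_mul _ _ _).symm
        _ = rescale (-1 : ZMod 3) E := by rw [key]
        _ = E := hrE
        _ = S * H := key.symm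
    exact mul_right_cancel₀ hHne heq
  -- conclude: odd coefficient vanishes
  have hodd : Odd d := ⟨n, hd⟩
  have h1 : coeff d (rescale (-1 : ZMod 3) S) = coeff d S := by rw [hrS]
  rw [coeff_rescale, hodd.neg_one_pow, neg_one_mul] at h1
  have h2 : (2 : ZMod 3) * coeff d S = 0 := by linear_combination - h1
  have h20 : (2 : ZMod 3) ≠ 0 := two_ne_zero''
  rcases mul_eq_zero.mp h2 with h | h
  · exact absurd h h20
  · exact h
end

section
/- The product formula ψ(q) := Σ_{n≥0} q^{n(n+1)/2} = Π_{n≥1} (1−q^{2n})²/(1−qⁿ) holds as formal power series. -/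
open PowerSeries Finset

namespace PsiAux

/-! ### Elementary natural number combinatorics -/

def cc : ℕ → ℕ
  | 0 => 0
  | k+1 => cc k + k

lemma cc_z (k : ℕ) : (cc k : ℤ) * 2 = k*k - k := by
  induction k with
  | zero => simp [cc]
  | succ j ih =>
    show ((cc j + j : ℕ) : ℤ) * 2 = _
    push_cast
    push_cast at ih
    linear_combination ih

def g (n k : ℕ) : ℕ := if n ≤ k then (k-n)*(2*(k-n)+1) else (n-k)*(2*(n-k)-1)

def rho (n k : ℕ) : ℕ := if n ≤ k then 2*(k-n) else 2*(n-k)-1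

lemma tri_rho (n k : ℕ) : rho n k * (rho n k + 1) / 2 = g n k := by
  unfold rho g
  split_ifs with h
  · set s := k - n
    have e : 2*s*(2*s+1) = 2*(s*(2*s+1)) := by ring
    rw [e, Nat.mul_div_cancel_left _ (by norm_num)]
  · set d := n - k with hd
    have hd1 : 1 ≤ d := by omega
    have e1 : 2*d - 1 + 1 = 2*d := by omega
    rw [e1]
    have e : (2*d-1)*(2*d) = 2*((2*d-1)*d) := by ring
    rw [e, Nat.mul_div_cancel_left _ (by norm_num), mul_comm]

lemma rho_inj (n k1 k2 : ℕ) (h : rho n k1 = rho n k2) : k1 = k2 := by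
  unfold rho at h; split_ifs at h <;> omega

lemma tri_inj (a b : ℕ) (h : a*(a+1)/2 = b*(b+1)/2) : a = b := by
  have ha : a*(a+1)/2*2 = a*(a+1) :=
    Nat.div_mul_cancel (even_iff_two_dvd.mp (Nat.even_mul_succ_self a))
  have hb : b*(b+1)/2*2 = b*(b+1) :=
    Nat.div_mul_cancel (even_iff_two_dvd.mp (Nat.even_mul_succ_self b))
  have h2 : a*(a+1) = b*(b+1) := by rw [← ha, ← hb, h]
  rcases lt_trichotomy a b with hlt | he | hgt
  · nlinarith
  · exact he
  · nlinarith

lemma g_inj (n k1 k2 : ℕ) (h : g n k1 = g n k2) : k1 = k2 := by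
  apply rho_inj n
  apply tri_inj
  rw [tri_rho, tri_rho, h]

open scoped Classical in
lemma indicator_sum (m j : ℕ) (hj : j ≤ m) :
    (∑ k ∈ range (2*(m+2)+1), if g (m+2) k = j then (1:ℤ) else 0)
      = if ∃ r : ℕ, r*(r+1)/2 = j then 1 else 0 := by
  set n := m + 2 with hn
  by_cases hex : ∃ r : ℕ, r*(r+1)/2 = j
  · rw [if_pos hex]
    obtain ⟨r, hr⟩ := hex
    have h2j : r*(r+1) = 2*j := by
      rw [← hr, Nat.mul_div_cancel' (even_iff_two_dvd.mp (Nat.even_mul_succ_self r))]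
    have hrm : r ≤ m := by nlinarith
    set k0 := if 2 ∣ r then n + r/2 else n - (r+1)/2 with hk0
    have hgk0 : g n k0 = j := by
      rw [hk0]
      split_ifs with hpar
      · have hs : r = 2*(r/2) := by omega
        set s := r/2
        have : g n (n+s) = s*(2*s+1) := by
          unfold g; rw [if_pos (by omega)]
          congr 1 <;> omega
        rw [this]
        apply Nat.eq_of_mul_eq_mul_left (show 0 < 2 by norm_num)
        rw [← h2j]
        nlinarith [hs]
      · have hs : r = 2*((r+1)/2) - 1 ∧ 1 ≤ (r+1)/2 := by omega
        set s := (r+1)/2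
        have hsn : s ≤ n := by omega
        have : g n (n - s) = s*(2*s-1) := by
          unfold g; rw [if_neg (by omega)]
          have : n - (n - s) = s := by omega
          rw [this]
        rw [this]
        apply Nat.eq_of_mul_eq_mul_left (show 0 < 2 by norm_num)
        rw [← h2j]
        have h1 : r = 2*s-1 := hs.1
        have h2 : r + 1 = 2*s := by omega
        calc (2:ℕ)*(s*(2*s-1)) = (2*s-1)*(2*s) := by ring
          _ = r * (r+1) := by rw [← h1, ← h2]
    rw [Finset.sum_eq_single k0]
    · rw [if_pos hgk0]
    · intro b _ hb
      rw [if_neg]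
      intro hgb
      exact hb (g_inj n b k0 (by rw [hgb, hgk0]))
    · intro hk0mem
      exfalso
      apply hk0mem
      rw [mem_range, hk0]
      split_ifs <;> omega
  · rw [if_neg hex]
    apply Finset.sum_eq_zero
    intro k _
    rw [if_neg]
    intro hg
    exact hex ⟨rho n k, by rw [tri_rho, hg]⟩

/-! ### Gaussian binomials and the q-binomial theorem -/

noncomputable def qb (t : PowerSeries ℤ) : ℕ → ℕ → PowerSeries ℤ
  | 0, 0 => 1
  | 0, _+1 => 0
  | _+1, 0 => 1
  | m+1, k+1 => qb t m (k+1) + t^(m-k) * qb t m k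

lemma qb_gt (t : PowerSeries ℤ) : ∀ m k, m < k → qb t m k = 0 := by
  intro m
  induction m with
  | zero => intro k h; match k, h with | k+1, _ => rfl
  | succ m ih =>
    intro k h
    match k, h with
    | k+1, h =>
      show qb t m (k+1) + t^(m-k) * qb t m k = 0
      rw [ih _ (by omega), ih _ (by omega)]; ring

lemma qb_self (t : PowerSeries ℤ) : ∀ m, qb t m m = 1 := by
  intro m
  induction m with
  | zero => rfl
  | succ m ih =>
    show qb t m (m+1) + t^(m-m) * qb t m m = 1
    rw [qb_gt t m (m+1) (by omega), ih]; simp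

lemma qb_zero (t : PowerSeries ℤ) (m : ℕ) : qb t m 0 = 1 := by cases m <;> rfl

lemma qb_succ_succ (t : PowerSeries ℤ) (m k : ℕ) :
    qb t (m+1) (k+1) = qb t m (k+1) + t^(m-k) * qb t m k := rfl

lemma qb_prod (t : PowerSeries ℤ) : ∀ m k, k ≤ m →
    qb t m k * (∏ j ∈ range k, (1 - t^(j+1))) * (∏ j ∈ range (m-k), (1 - t^(j+1)))
      = ∏ j ∈ range m, (1 - t^(j+1)) := by
  intro m
  induction m with
  | zero => intro k hk; interval_cases k; simp [qb]
  | succ m ih =>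
    intro k hk
    match k with
    | 0 => simp [qb]
    | k+1 =>
      rcases Nat.lt_or_ge k m with h | h
      · show (qb t m (k+1) + t^(m-k) * qb t m k) * _ * _ = _
        have h1 := ih (k+1) (by omega)
        have h2 := ih k (by omega)
        have e1 : m + 1 - (k+1) = m - k := by omega
        have e2 : m - k = (m - (k+1)) + 1 := by omega
        have hpow : t^(m-k) * t^(k+1) = t^(m+1) := by rw [← pow_add]; congr 1; omega
        have eC : (∏ j ∈ range (m-k), (1 - t^(j+1)))
            = (∏ j ∈ range (m-(k+1)), (1 - t^(j+1))) * (1 - t^(m-k)) := by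
          rw [e2, Finset.prod_range_succ, ← e2]
        have eP : (∏ j ∈ range (m+1), (1 - t^(j+1)))
            = (∏ j ∈ range m, (1 - t^(j+1))) * (1 - t^(m+1)) := Finset.prod_range_succ _ _
        have eA : (∏ j ∈ range (k+1), (1 - t^(j+1)))
            = (∏ j ∈ range k, (1 - t^(j+1))) * (1 - t^(k+1)) := Finset.prod_range_succ _ _
        rw [e1, eC, eP]
        rw [eC] at h2
        rw [eA] at h1 ⊢
        linear_combination (1 - t^(m-k)) * h1 + (t^(m-k) * (1 - t^(k+1))) * h2
          - (∏ j ∈ range m, (1 - t^(j+1))) * hpow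
      · have hk' : m = k := by omega
        subst hk'
        rw [qb_self]
        simp

lemma qbt (t x y : PowerSeries ℤ) : ∀ m,
    ∏ i ∈ range m, (x + y * t^i)
      = ∑ k ∈ range (m+1), qb t m k * t^(cc k) * x^(m-k) * y^k := by
  intro m
  induction m with
  | zero => simp [qb, cc]
  | succ m ih =>
    rw [Finset.prod_range_succ, ih]
    rw [Finset.sum_range_succ'
      (fun k => qb t (m+1) k * t^(cc k) * x^(m+1-k) * y^k) (m+1)]
    simp only [qb_zero, cc, pow_zero, mul_one, one_mul, Nat.sub_zero]
    have hG : ∀ k ∈ range (m+1),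
        qb t (m+1) (k+1) * t^(cc k + k) * x^(m+1-(k+1)) * y^(k+1)
          = (qb t m (k+1) * t^(cc k + k) * x^(m-k) * y^(k+1))
            + (qb t m k * t^(cc k) * x^(m-k) * y^k) * (y * t^m) := by
      intro k hk
      have hkm : k ≤ m := by simpa using Nat.lt_succ_iff.mp (mem_range.mp hk)
      rw [qb_succ_succ]
      have hp : t^(m-k) * t^(cc k + k) = t^(cc k) * t^m := by
        rw [← pow_add, ← pow_add]
        congr 1
        omega
      have e : m + 1 - (k+1) = m - k := by omega
      rw [e]
      linear_combination (qb t m k * x^(m-k) * y^(k+1)) * hp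
    rw [Finset.sum_congr rfl hG, Finset.sum_add_distrib]
    have hA : ∑ k ∈ range (m+1), qb t m (k+1) * t^(cc k + k) * x^(m-k) * y^(k+1)
        = ∑ k ∈ range m, qb t m (k+1) * t^(cc k + k) * x^(m-k) * y^(k+1) := by
      rw [Finset.sum_range_succ, qb_gt t m (m+1) (by omega)]
      ring_nf
      exact Finset.sum_congr rfl (fun _ _ => by ring)
    have hx : ∑ k ∈ range (m+1), qb t m k * t^(cc k) * x^(m-k) * y^k * x
        = (∑ k ∈ range m, qb t m (k+1) * t^(cc k + k) * x^(m-k) * y^(k+1)) + x^(m+1) := by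
      rw [Finset.sum_range_succ' (fun k => qb t m k * t^(cc k) * x^(m-k) * y^k * x) m]
      simp only [qb_zero, cc, pow_zero, mul_one, one_mul, Nat.sub_zero]
      congr 1
      apply Finset.sum_congr rfl
      intro k hk
      have hkm : k < m := mem_range.mp hk
      have e : m - (k+1) + 1 = m - k := by omega
      rw [← e, pow_succ]
      ring
    have hL : (∑ k ∈ range (m+1), qb t m k * t^(cc k) * x^(m-k) * y^k) * (x + y * t^m)
        = (∑ k ∈ range (m+1), (qb t m k * t^(cc k) * x^(m-k) * y^k) * x)
          + ∑ k ∈ range (m+1), (qb t m k * t^(cc k) * x^(m-k) * y^k) * (y * t^m) := by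
      rw [mul_add, Finset.sum_mul, Finset.sum_mul]
    rw [hL, hx, hA]
    ring

/-! ### The specialization `t = X^4` -/

noncomputable def tt : PowerSeries ℤ := X^4

noncomputable def Pn (a : ℕ) : PowerSeries ℤ := ∏ j ∈ range a, (1 - tt^(j+1))

lemma constantCoeff_Pn (a : ℕ) : constantCoeff (Pn a) = 1 := by
  unfold Pn tt
  rw [map_prod]
  apply Finset.prod_eq_one
  intro j _
  simp [zero_pow]

lemma Pn_ne_zero (a : ℕ) : Pn a ≠ 0 := by
  intro h
  have := constantCoeff_Pn a
  rw [h, map_zero] at this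
  simp at this

lemma X_pow_dvd_prod_sub_one (c : ℕ) (s : Finset ℕ) (f : ℕ → PowerSeries ℤ)
    (h : ∀ j ∈ s, (X:PowerSeries ℤ)^c ∣ f j - 1) :
    (X:PowerSeries ℤ)^c ∣ (∏ j ∈ s, f j) - 1 := by
  induction s using Finset.cons_induction with
  | empty => simp
  | cons a s ha ih =>
    rw [Finset.prod_cons]
    have h1 := h a (Finset.mem_cons_self a s)
    have h2 := ih (fun j hj => h j (Finset.mem_cons_of_mem hj))
    have e : f a * ∏ j ∈ s, f j - 1
        = (f a - 1) * (∏ j ∈ s, f j) + ((∏ j ∈ s, f j) - 1) := by ring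
    rw [e]
    exact dvd_add (h1.mul_right _) h2

lemma prod_even_odd {M : Type*} [CommMonoid M] (f : ℕ → M) (n : ℕ) :
    ∏ i ∈ range (2*n), f i = (∏ i ∈ range n, f (2*i)) * ∏ i ∈ range n, f (2*i+1) := by
  induction n with
  | zero => simp
  | succ n ih =>
    rw [show 2*(n+1) = 2*n+1+1 from by ring, Finset.prod_range_succ, Finset.prod_range_succ,
      Finset.prod_range_succ (fun i => f (2*i)), Finset.prod_range_succ (fun i => f (2*i+1)), ih]
    simp only [mul_assoc, mul_comm, mul_left_comm]

lemma keyD (n k : ℕ) (hk : k ≤ 2*n) :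
    (X:PowerSeries ℤ)^(4*(min k (2*n-k)) + 4) ∣ qb tt (2*n) k * Pn n - 1 := by
  have han : min k (2*n-k) ≤ n := by omega
  have hbn : n ≤ max k (2*n-k) := by omega
  have hb2n : max k (2*n-k) ≤ 2*n := by omega
  set a := min k (2*n-k) with hadef
  set b := max k (2*n-k) with hbdef
  have hqE : qb tt (2*n) k * Pn n
      = (∏ j ∈ Ico a n, (1 - tt^(j+1))) * (∏ j ∈ Ico b (2*n), (1 - tt^(j+1))) := by
    apply mul_right_cancel₀ (mul_ne_zero (Pn_ne_zero k) (Pn_ne_zero (2*n-k)))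
    have hab : Pn k * Pn (2*n-k) = Pn a * Pn b := by
      rcases le_total k (2*n-k) with h | h
      · rw [hadef, hbdef, min_eq_left h, max_eq_right h]
      · rw [hadef, hbdef, min_eq_right h, max_eq_left h, mul_comm]
    calc qb tt (2*n) k * Pn n * (Pn k * Pn (2*n-k))
        = (qb tt (2*n) k * Pn k * Pn (2*n-k)) * Pn n := by ring
      _ = Pn (2*n) * Pn n := by
          unfold Pn
          rw [qb_prod tt (2*n) k hk]
      _ = ((∏ j ∈ Ico a n, (1 - tt^(j+1))) * (∏ j ∈ Ico b (2*n), (1 - tt^(j+1))))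
            * (Pn a * Pn b) := by
          unfold Pn
          rw [show ((∏ j ∈ Ico a n, (1 - tt^(j+1))) * (∏ j ∈ Ico b (2*n), (1 - tt^(j+1))))
              * ((∏ j ∈ range a, (1 - tt^(j+1))) * (∏ j ∈ range b, (1 - tt^(j+1))))
              = ((∏ j ∈ range a, (1 - tt^(j+1))) * (∏ j ∈ Ico a n, (1 - tt^(j+1))))
                * ((∏ j ∈ range b, (1 - tt^(j+1))) * (∏ j ∈ Ico b (2*n), (1 - tt^(j+1)))) from by
              ring]
          rw [Finset.prod_range_mul_prod_Ico _ han, Finset.prod_range_mul_prod_Ico _ hb2n]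
          ring
      _ = ((∏ j ∈ Ico a n, (1 - tt^(j+1))) * (∏ j ∈ Ico b (2*n), (1 - tt^(j+1))))
            * (Pn k * Pn (2*n-k)) := by rw [hab]
  rw [hqE]
  have hdvd : ∀ (lo hi : ℕ), a ≤ lo →
      (X:PowerSeries ℤ)^(4*a+4) ∣ (∏ j ∈ Ico lo hi, (1 - tt^(j+1))) - 1 := by
    intro lo hi hlo
    apply X_pow_dvd_prod_sub_one
    intro j hj
    have hja : a ≤ j := le_trans hlo (Finset.mem_Ico.mp hj).1
    have e : (1 : PowerSeries ℤ) - tt^(j+1) - 1 = -(X^(4*(j+1))) := by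
      unfold tt; rw [← pow_mul]; ring
    rw [e]
    exact (pow_dvd_pow X (by omega)).neg_right
  have h1 := hdvd a n (le_refl a)
  have h2 := hdvd b (2*n) (by omega)
  have e : (∏ j ∈ Ico a n, (1 - tt^(j+1))) * (∏ j ∈ Ico b (2*n), (1 - tt^(j+1))) - 1
      = ((∏ j ∈ Ico a n, (1 - tt^(j+1))) - 1) * (∏ j ∈ Ico b (2*n), (1 - tt^(j+1)))
        + ((∏ j ∈ Ico b (2*n), (1 - tt^(j+1))) - 1) := by ring
  rw [e]
  exact dvd_add (h1.mul_right _) h2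

lemma exp_eq (n k : ℕ) (hn : 1 ≤ n) (hk : k ≤ 2*n) :
    4 * cc k + (4*n-3) * (2*n-k) = (6*n^2 - 5*n) + g n k := by
  have hc := cc_z k
  have h5 : 5*n ≤ 6*n^2 := by nlinarith
  have h3 : 3 ≤ 4*n := by omega
  unfold g
  split_ifs with h
  · zify [h, hk, h5, h3]
    linear_combination 2 * hc
  · push_neg at h
    have h1 : k ≤ n := by omega
    have h2 : 1 ≤ 2*(n-k) := by omega
    zify [h1, hk, h5, h3, h2]
    linear_combination 2 * hc

lemma lhs_fact (n : ℕ) (hn : 1 ≤ n) :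
    ∏ i ∈ range (2*n), ((X:PowerSeries ℤ)^(4*n-3) + 1 * tt^i)
      = X^(6*n^2-5*n) * ∏ j ∈ range (2*n), (1 + (X:PowerSeries ℤ)^(2*j+1)) := by
  rw [← Finset.prod_range_mul_prod_Ico (fun i => (X:PowerSeries ℤ)^(4*n-3) + 1 * tt^i)
    (show n ≤ 2*n by omega)]
  have hp1 : ∏ i ∈ range n, ((X:PowerSeries ℤ)^(4*n-3) + 1*tt^i)
      = X^(2*(n*(n-1))) * ∏ j ∈ range n, (1 + (X:PowerSeries ℤ)^(4*j+1)) := by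
    calc ∏ i ∈ range n, ((X:PowerSeries ℤ)^(4*n-3) + 1*tt^i)
        = ∏ i ∈ range n, ((X:PowerSeries ℤ)^(4*i) * (1 + X^(4*(n-i)-3))) := by
          apply Finset.prod_congr rfl
          intro i hi
          have hin : i < n := mem_range.mp hi
          unfold tt
          rw [one_mul, ← pow_mul, show 4*n-3 = 4*i + (4*(n-i)-3) from by omega, pow_add]
          ring
      _ = (∏ i ∈ range n, (X:PowerSeries ℤ)^(4*i))
            * ∏ i ∈ range n, (1 + (X:PowerSeries ℤ)^(4*(n-i)-3)) :=
          Finset.prod_mul_distrib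
      _ = X^(2*(n*(n-1))) * ∏ j ∈ range n, (1 + (X:PowerSeries ℤ)^(4*j+1)) := by
          congr 1
          · rw [Finset.prod_pow_eq_pow_sum]
            congr 1
            have hS := Finset.sum_range_id_mul_two n
            calc ∑ i ∈ range n, 4*i = 4 * ∑ i ∈ range n, i := by rw [Finset.mul_sum]
              _ = 2*((∑ i ∈ range n, i)*2) := by ring
              _ = 2*(n*(n-1)) := by rw [hS]
          · rw [← Finset.prod_range_reflect (fun i => 1 + (X:PowerSeries ℤ)^(4*(n-i)-3)) n]
            apply Finset.prod_congr rfl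
            intro j hj
            have hjn : j < n := mem_range.mp hj
            rw [show 4*(n-(n-1-j))-3 = 4*j+1 from by omega]
  have hp2 : ∏ i ∈ Ico n (2*n), ((X:PowerSeries ℤ)^(4*n-3) + 1*tt^i)
      = X^((4*n-3)*n) * ∏ j ∈ range n, (1 + (X:PowerSeries ℤ)^(4*j+3)) := by
    rw [Finset.prod_Ico_eq_prod_range, show 2*n - n = n from by omega]
    calc ∏ j ∈ range n, ((X:PowerSeries ℤ)^(4*n-3) + 1*tt^(n+j))
        = ∏ j ∈ range n, ((X:PowerSeries ℤ)^(4*n-3) * (1 + X^(4*j+3))) := by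
          apply Finset.prod_congr rfl
          intro j _
          unfold tt
          rw [one_mul, ← pow_mul, show 4*(n+j) = (4*n-3) + (4*j+3) from by omega, pow_add]
          ring
      _ = (∏ j ∈ range n, (X:PowerSeries ℤ)^(4*n-3))
            * ∏ j ∈ range n, (1 + (X:PowerSeries ℤ)^(4*j+3)) :=
          Finset.prod_mul_distrib
      _ = X^((4*n-3)*n) * ∏ j ∈ range n, (1 + (X:PowerSeries ℤ)^(4*j+3)) := by
          rw [Finset.prod_const, Finset.card_range, ← pow_mul]
  rw [hp1, hp2]
  have hodds : (∏ j ∈ range n, (1 + (X:PowerSeries ℤ)^(4*j+1)))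
        * ∏ j ∈ range n, (1 + (X:PowerSeries ℤ)^(4*j+3))
      = ∏ j ∈ range (2*n), (1 + (X:PowerSeries ℤ)^(2*j+1)) := by
    rw [prod_even_odd (fun j => 1 + (X:PowerSeries ℤ)^(2*j+1)) n]
    congr 1
    · apply Finset.prod_congr rfl; intro j _; rw [show 2*(2*j)+1 = 4*j+1 from by ring]
    · apply Finset.prod_congr rfl; intro j _; rw [show 2*(2*j+1)+1 = 4*j+3 from by ring]
  have hpow : (X:PowerSeries ℤ)^(2*(n*(n-1))) * X^((4*n-3)*n) = X^(6*n^2-5*n) := by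
    rw [← pow_add]
    congr 1
    have h5 : 5*n ≤ 6*n^2 := by nlinarith
    zify [hn, h5, show 3 ≤ 4*n from by omega]
    ring
  calc X^(2*(n*(n-1))) * (∏ j ∈ range n, (1 + (X:PowerSeries ℤ)^(4*j+1)))
        * (X^((4*n-3)*n) * ∏ j ∈ range n, (1 + (X:PowerSeries ℤ)^(4*j+3)))
      = (X^(2*(n*(n-1))) * X^((4*n-3)*n)) *
        ((∏ j ∈ range n, (1 + (X:PowerSeries ℤ)^(4*j+1)))
          * ∏ j ∈ range n, (1 + (X:PowerSeries ℤ)^(4*j+3))) := by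
        ring
    _ = X^(6*n^2-5*n) * ∏ j ∈ range (2*n), (1 + (X:PowerSeries ℤ)^(2*j+1)) := by
        rw [hpow, hodds]

lemma specB (n : ℕ) (hn : 1 ≤ n) :
    ∏ j ∈ range (2*n), (1 + (X:PowerSeries ℤ)^(2*j+1))
      = ∑ k ∈ range (2*n+1), qb tt (2*n) k * X^(g n k) := by
  apply mul_left_cancel₀ (pow_ne_zero (6*n^2-5*n) (X_ne_zero (R := ℤ)))
  rw [Finset.mul_sum, ← lhs_fact n hn, qbt tt ((X:PowerSeries ℤ)^(4*n-3)) 1 (2*n)]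
  apply Finset.sum_congr rfl
  intro k hk
  have hk2n : k ≤ 2*n := by have := mem_range.mp hk; omega
  have key : tt^(cc k) * ((X:PowerSeries ℤ)^(4*n-3))^(2*n-k) = X^(6*n^2-5*n) * X^(g n k) := by
    unfold tt
    rw [← pow_mul, ← pow_mul, ← pow_add, ← pow_add, exp_eq n k hn hk2n]
  linear_combination (qb tt (2*n) k) * key

/-! ### Coefficient extraction -/

lemma gap_lt (m j n k : ℕ) (hn : n = m+2) (hk : k ≤ 2*n) (hj : j ≤ m) (hg : g n k ≤ j) :
    j - g n k < 4*(min k (2*n-k)) + 4 := by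
  have hj' : (j:ℤ) ≤ m := by exact_mod_cast hj
  have hn' : (n:ℤ) = m+2 := by exact_mod_cast hn
  have hk' : (k:ℤ) ≤ 2*n := by exact_mod_cast hk
  unfold g at hg ⊢
  split_ifs at hg ⊢ with h
  · have h' : (n:ℤ) ≤ k := by exact_mod_cast h
    rw [min_eq_right (by omega : 2*n-k ≤ k)]
    zify [hg, hk, h]
    nlinarith [sq_nonneg ((k:ℤ) - (n:ℤ) - 1)]
  · push_neg at h
    have h' : (k:ℤ) < n := by exact_mod_cast h
    rw [min_eq_left (by omega : k ≤ 2*n-k)]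
    have h2 : 1 ≤ 2*(n-k) := by omega
    zify [hg, hk, (by omega : k ≤ n), h2]
    nlinarith [sq_nonneg ((n:ℤ) - (k:ℤ) - 2)]

lemma coeff_term (m j n k : ℕ) (hn : n = m+2) (hk : k ≤ 2*n) (hj : j ≤ m) :
    (PowerSeries.coeff j) ((qb tt (2*n) k * Pn n) * X^(g n k))
      = if g n k = j then 1 else 0 := by
  rw [PowerSeries.coeff_mul_X_pow']
  by_cases h1 : g n k ≤ j
  · rw [if_pos h1]
    have hlt : j - g n k < 4*(min k (2*n-k)) + 4 := gap_lt m j n k hn hk hj h1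
    have h0 : (PowerSeries.coeff (j - g n k)) (qb tt (2*n) k * Pn n - 1) = 0 :=
      PowerSeries.X_pow_dvd_iff.mp (keyD n k hk) _ hlt
    rw [map_sub] at h0
    have e1 : PowerSeries.coeff (j - g n k) (qb tt (2*n) k * Pn n)
        = PowerSeries.coeff (j - g n k) 1 := by
      have := sub_eq_zero.mp h0
      exact this
    rw [e1, PowerSeries.coeff_one]
    split_ifs <;> omega
  · rw [if_neg h1, if_neg (by omega)]

open scoped Classical in
lemma coeff_main (m j : ℕ) (hj : j ≤ m) :
    PowerSeries.coeff j
        ((∏ i ∈ range (2*(m+2)), (1 + (X:PowerSeries ℤ)^(2*i+1))) * Pn (m+2))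
      = if ∃ r : ℕ, r*(r+1)/2 = j then 1 else 0 := by
  rw [specB (m+2) (by omega)]
  have e : (∑ k ∈ range (2*(m+2)+1), qb tt (2*(m+2)) k * X^(g (m+2) k)) * Pn (m+2)
      = ∑ k ∈ range (2*(m+2)+1), (qb tt (2*(m+2)) k * Pn (m+2)) * X^(g (m+2) k) := by
    rw [Finset.sum_mul]
    apply Finset.sum_congr rfl
    intro k _
    ring
  rw [e, map_sum]
  rw [Finset.sum_congr rfl
    (fun k hk => coeff_term m j (m+2) k rfl (by have := mem_range.mp hk; omega) hj)]
  exact indicator_sum m j hj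

open scoped Classical in
lemma coeff_psi (j : ℕ) :
    PowerSeries.coeff j psi = if ∃ r : ℕ, r*(r+1)/2 = j then 1 else 0 := by
  unfold psi
  rw [PowerSeries.coeff_mk]

/-! ### Rearranging products modulo `X^(m+1)` -/

lemma juggle (m : ℕ) :
    (X:PowerSeries ℤ)^(m+1) ∣
      (∏ i ∈ range (m+1), (1 - (X:PowerSeries ℤ)^(2*(i+1))))^2
        - (∏ i ∈ range (2*(m+2)), (1 + (X:PowerSeries ℤ)^(2*i+1))) * Pn (m+2)
          * ∏ i ∈ range (m+1), (1 - (X:PowerSeries ℤ)^(i+1)) := by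
  set n := m+2 with hn
  set I : Ideal (PowerSeries ℤ) := Ideal.span {(X:PowerSeries ℤ)^(m+1)} with hI
  set π : PowerSeries ℤ →+* (PowerSeries ℤ ⧸ I) := Ideal.Quotient.mk I with hπ
  have hXe : ∀ e : ℕ, m < e → π ((X:PowerSeries ℤ)^e) = 0 := by
    intro e he
    rw [hπ, Ideal.Quotient.eq_zero_iff_mem, hI, Ideal.mem_span_singleton]
    exact pow_dvd_pow X (by omega)
  have hminus : ∀ e, m < e → π (1 - (X:PowerSeries ℤ)^e) = 1 := by
    intro e he
    rw [map_sub, map_one, hXe e he, sub_zero]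
  have hplus : ∀ e, m < e → π (1 + (X:PowerSeries ℤ)^e) = 1 := by
    intro e he
    rw [map_add, map_one, hXe e he, add_zero]
  have hext : ∀ (F : ℕ → PowerSeries ℤ ⧸ I) (a b : ℕ), a ≤ b →
      (∀ i, a ≤ i → i < b → F i = 1) → ∏ i ∈ range b, F i = ∏ i ∈ range a, F i := by
    intro F a b hab h
    rw [← Finset.prod_range_mul_prod_Ico F hab,
      Finset.prod_eq_one (fun i hi => h i (Finset.mem_Ico.mp hi).1 (Finset.mem_Ico.mp hi).2),
      mul_one]
  have h_u : π (∏ i ∈ range (m+1), (1 - (X:PowerSeries ℤ)^(i+1)))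
      = (∏ i ∈ range n, π (1 - (X:PowerSeries ℤ)^(2*i+1)))
        * ∏ i ∈ range n, π (1 - (X:PowerSeries ℤ)^(2*i+2)) := by
    rw [map_prod]
    rw [← hext (fun i => π (1 - (X:PowerSeries ℤ)^(i+1))) (m+1) (2*n) (by omega)
      (fun i hi _ => hminus (i+1) (by omega))]
    rw [prod_even_odd (fun i => π (1 - (X:PowerSeries ℤ)^(i+1))) n]
  have h_odd : π (∏ i ∈ range (2*n), (1 + (X:PowerSeries ℤ)^(2*i+1)))
      = ∏ i ∈ range n, π (1 + (X:PowerSeries ℤ)^(2*i+1)) := by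
    rw [map_prod]
    exact hext (fun i => π (1 + (X:PowerSeries ℤ)^(2*i+1))) n (2*n) (by omega)
      (fun i hi _ => hplus (2*i+1) (by omega))
  have h_Pn : π (Pn n) = ∏ i ∈ range n, π (1 - (X:PowerSeries ℤ)^(4*i+4)) := by
    unfold Pn tt
    rw [map_prod]
    apply Finset.prod_congr rfl
    intro i _
    rw [← pow_mul, show 4*(i+1) = 4*i+4 from by ring]
  have h_pair : (∏ i ∈ range n, π (1 + (X:PowerSeries ℤ)^(2*i+1)))
        * ∏ i ∈ range n, π (1 - (X:PowerSeries ℤ)^(2*i+1))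
      = ∏ i ∈ range n, π (1 - (X:PowerSeries ℤ)^(4*i+2)) := by
    rw [← Finset.prod_mul_distrib]
    apply Finset.prod_congr rfl
    intro i _
    rw [← map_mul]
    congr 1
    rw [show 4*i+2 = (2*i+1) + (2*i+1) from by ring, pow_add]
    ring
  have h_merge : (∏ i ∈ range n, π (1 - (X:PowerSeries ℤ)^(4*i+2)))
        * ∏ i ∈ range n, π (1 - (X:PowerSeries ℤ)^(4*i+4))
      = ∏ i ∈ range (2*n), π (1 - (X:PowerSeries ℤ)^(2*i+2)) := by
    rw [prod_even_odd (fun i => π (1 - (X:PowerSeries ℤ)^(2*i+2))) n]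
    rw [Finset.prod_congr rfl (fun i (_ : i ∈ range n) =>
      show π (1 - (X:PowerSeries ℤ)^(2*(2*i)+2)) = π (1 - (X:PowerSeries ℤ)^(4*i+2)) from by
        rw [show 2*(2*i)+2 = 4*i+2 from by ring])]
    rw [Finset.prod_congr rfl (fun i (_ : i ∈ range n) =>
      show π (1 - (X:PowerSeries ℤ)^(2*(2*i+1)+2)) = π (1 - (X:PowerSeries ℤ)^(4*i+4)) from by
        rw [show 2*(2*i+1)+2 = 4*i+4 from by ring])]
  have h_A : π (∏ i ∈ range (m+1), (1 - (X:PowerSeries ℤ)^(2*(i+1))))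
      = ∏ i ∈ range (m+1), π (1 - (X:PowerSeries ℤ)^(2*i+2)) := by
    rw [map_prod]
    apply Finset.prod_congr rfl
    intro i _
    rw [show 2*(i+1) = 2*i+2 from by ring]
  have h_tr1 : ∏ i ∈ range (2*n), π (1 - (X:PowerSeries ℤ)^(2*i+2))
      = ∏ i ∈ range (m+1), π (1 - (X:PowerSeries ℤ)^(2*i+2)) :=
    hext _ (m+1) (2*n) (by omega) (fun i hi _ => hminus (2*i+2) (by omega))
  have h_tr2 : ∏ i ∈ range n, π (1 - (X:PowerSeries ℤ)^(2*i+2))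
      = ∏ i ∈ range (m+1), π (1 - (X:PowerSeries ℤ)^(2*i+2)) :=
    hext _ (m+1) n (by omega) (fun i hi _ => hminus (2*i+2) (by omega))
  have main : π ((∏ i ∈ range (m+1), (1 - (X:PowerSeries ℤ)^(2*(i+1))))^2)
      = π ((∏ i ∈ range (2*n), (1 + (X:PowerSeries ℤ)^(2*i+1))) * Pn n
          * ∏ i ∈ range (m+1), (1 - (X:PowerSeries ℤ)^(i+1))) := by
    rw [map_pow, map_mul, map_mul, h_A, h_odd, h_Pn, h_u]
    calc (∏ i ∈ range (m+1), π (1 - (X:PowerSeries ℤ)^(2*i+2)))^2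
        = (∏ i ∈ range (2*n), π (1 - (X:PowerSeries ℤ)^(2*i+2)))
          * ∏ i ∈ range n, π (1 - (X:PowerSeries ℤ)^(2*i+2)) := by
          rw [h_tr1, h_tr2]; ring
      _ = ((∏ i ∈ range n, π (1 - (X:PowerSeries ℤ)^(4*i+2)))
            * ∏ i ∈ range n, π (1 - (X:PowerSeries ℤ)^(4*i+4)))
          * ∏ i ∈ range n, π (1 - (X:PowerSeries ℤ)^(2*i+2)) := by rw [h_merge]
      _ = ((∏ i ∈ range n, π (1 + (X:PowerSeries ℤ)^(2*i+1)))
            * ∏ i ∈ range n, π (1 - (X:PowerSeries ℤ)^(2*i+1)))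
          * (∏ i ∈ range n, π (1 - (X:PowerSeries ℤ)^(4*i+4)))
          * ∏ i ∈ range n, π (1 - (X:PowerSeries ℤ)^(2*i+2)) := by rw [h_pair]
      _ = (∏ i ∈ range n, π (1 + (X:PowerSeries ℤ)^(2*i+1)))
          * (∏ i ∈ range n, π (1 - (X:PowerSeries ℤ)^(4*i+4)))
          * ((∏ i ∈ range n, π (1 - (X:PowerSeries ℤ)^(2*i+1)))
            * ∏ i ∈ range n, π (1 - (X:PowerSeries ℤ)^(2*i+2))) := by ring
  have hmem := Ideal.Quotient.eq.mp main
  rw [hI] at hmem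
  exact Ideal.mem_span_singleton.mp hmem

end PsiAux

theorem psi_product_formula :
    ∀ n : ℕ,
      PowerSeries.coeff n psi =
        PowerSeries.coeff n
          ((∏ i ∈ range (n + 1), (1 - (X : PowerSeries ℤ) ^ (2 * (i + 1)))) ^ 2 *
            PowerSeries.invOfUnit
              (∏ i ∈ range (n + 1), (1 - (X : PowerSeries ℤ) ^ (i + 1))) 1) := by
  intro m
  have hu1 : constantCoeff (∏ i ∈ range (m+1), (1 - (X:PowerSeries ℤ)^(i+1))) = 1 := by
    rw [map_prod]
    apply Finset.prod_eq_one
    intro i _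
    simp [zero_pow]
  have huinv : (∏ i ∈ range (m+1), (1 - (X:PowerSeries ℤ)^(i+1)))
      * PowerSeries.invOfUnit (∏ i ∈ range (m+1), (1 - (X:PowerSeries ℤ)^(i+1))) 1 = 1 :=
    PowerSeries.mul_invOfUnit _ 1 (by simpa using hu1)
  have hdvd1 : (X:PowerSeries ℤ)^(m+1) ∣
      (∏ i ∈ range (2*(m+2)), (1 + (X:PowerSeries ℤ)^(2*i+1))) * PsiAux.Pn (m+2) - psi := by
    rw [PowerSeries.X_pow_dvd_iff]
    intro j hj
    rw [map_sub, PsiAux.coeff_main m j (by omega), PsiAux.coeff_psi j, sub_self]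
  have hdvd2 := PsiAux.juggle m
  have hdvd : (X:PowerSeries ℤ)^(m+1) ∣
      (∏ i ∈ range (m+1), (1 - (X:PowerSeries ℤ)^(2*(i+1))))^2
        - psi * ∏ i ∈ range (m+1), (1 - (X:PowerSeries ℤ)^(i+1)) := by
    have e : (∏ i ∈ range (m+1), (1 - (X:PowerSeries ℤ)^(2*(i+1))))^2
          - psi * ∏ i ∈ range (m+1), (1 - (X:PowerSeries ℤ)^(i+1))
        = ((∏ i ∈ range (m+1), (1 - (X:PowerSeries ℤ)^(2*(i+1))))^2
            - (∏ i ∈ range (2*(m+2)), (1 + (X:PowerSeries ℤ)^(2*i+1))) * PsiAux.Pn (m+2)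
              * ∏ i ∈ range (m+1), (1 - (X:PowerSeries ℤ)^(i+1)))
          + ((∏ i ∈ range (2*(m+2)), (1 + (X:PowerSeries ℤ)^(2*i+1))) * PsiAux.Pn (m+2) - psi)
            * ∏ i ∈ range (m+1), (1 - (X:PowerSeries ℤ)^(i+1)) := by ring
    rw [e]
    exact dvd_add hdvd2 (hdvd1.mul_right _)
  obtain ⟨r, hr⟩ := hdvd
  have hA2 : (∏ i ∈ range (m+1), (1 - (X:PowerSeries ℤ)^(2*(i+1))))^2
      = psi * (∏ i ∈ range (m+1), (1 - (X:PowerSeries ℤ)^(i+1)))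
        + (X:PowerSeries ℤ)^(m+1) * r := by
    linear_combination hr
  have e2 : (∏ i ∈ range (m+1), (1 - (X:PowerSeries ℤ)^(2*(i+1))))^2
      * PowerSeries.invOfUnit (∏ i ∈ range (m+1), (1 - (X:PowerSeries ℤ)^(i+1))) 1
    = psi * ((∏ i ∈ range (m+1), (1 - (X:PowerSeries ℤ)^(i+1)))
        * PowerSeries.invOfUnit (∏ i ∈ range (m+1), (1 - (X:PowerSeries ℤ)^(i+1))) 1)
      + (X:PowerSeries ℤ)^(m+1)
        * (r * PowerSeries.invOfUnit (∏ i ∈ range (m+1), (1 - (X:PowerSeries ℤ)^(i+1))) 1) := by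
    rw [hA2]; ring
  rw [e2, huinv, mul_one, map_add]
  have hz : PowerSeries.coeff m ((X:PowerSeries ℤ)^(m+1)
      * (r * PowerSeries.invOfUnit (∏ i ∈ range (m+1), (1 - (X:PowerSeries ℤ)^(i+1))) 1)) = 0 := by
    rw [mul_comm, PowerSeries.coeff_mul_X_pow', if_neg (by omega)]
  rw [hz, add_zero]
end

section
/- As formal power series over ℤ, (q;q)³_∞ ≡ (q³;q³)_∞ (mod 3), i.e., all coefficients of (q;q)³_∞ − (q³;q³)_∞ are divisible by 3. -/
open PowerSeries Finset

theorem euler_cube_mod_three :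
    ∀ n : ℕ,
      (3 : ℤ) ∣ PowerSeries.coeff n
        ((∏ i ∈ range (n + 1), (1 - (X : PowerSeries ℤ) ^ (i + 1))) ^ 3 -
          ∏ i ∈ range (n + 1), (1 - (X : PowerSeries ℤ) ^ (3 * (i + 1)))) := by
  intro n
  have h : (PowerSeries.map (Int.castRingHom (ZMod 3)))
      ((∏ i ∈ range (n + 1), (1 - (X : PowerSeries ℤ) ^ (i + 1))) ^ 3 -
        ∏ i ∈ range (n + 1), (1 - (X : PowerSeries ℤ) ^ (3 * (i + 1)))) = 0 := by
    rw [map_sub, map_pow, map_prod, map_prod]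
    simp only [map_sub, map_one, map_pow, PowerSeries.map_X]
    rw [← Finset.prod_pow]
    rw [sub_eq_zero]
    refine Finset.prod_congr rfl fun i _ => ?_
    have h3 : (3 : PowerSeries (ZMod 3)) = 0 := by
      rw [← map_ofNat (PowerSeries.C (R := ZMod 3)) 3, show (3 : ZMod 3) = 0 by decide, map_zero]
    linear_combination (((X : PowerSeries (ZMod 3)) ^ (i + 1)) ^ 2
      - (X : PowerSeries (ZMod 3)) ^ (i + 1)) * h3
  have := congrArg (PowerSeries.coeff (R := ZMod 3) n) h
  rw [PowerSeries.coeff_map, map_zero, Int.coe_castRingHom] at this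
  exact_mod_cast (ZMod.intCast_zmod_eq_zero_iff_dvd _ 3).mp this
end

section
/- Assuming Σ_{n≥0} Δ₂(3n+1) qⁿ ≡ 2q ψ(q⁵)² (mod 3), one has Σ_{n≥0} Δ₂(9n+7) qⁿ ≡ 2q³ ψ(q¹⁵)² (mod 3) as formal power series. -/
open PowerSeries Finset

open scoped Classical

/-- The coefficient of `q^n` in `ψ(q^k)` as an indicator. -/
lemma coeff_substPow_psi (k n : ℕ) (hk : 0 < k) :
    PowerSeries.coeff n (substPow k psi) =
      if ∃ m : ℕ, 2 * n = k * (m * (m + 1)) then 1 else 0 := by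
  rw [substPow, coeff_mk]
  by_cases hd : k ∣ n
  · obtain ⟨c, rfl⟩ := hd
    rw [if_pos ⟨c, rfl⟩, psi, coeff_mk]
    have hdc : (k * c) / k = c := Nat.mul_div_cancel_left c hk
    rw [hdc]
    congr 1
    apply propext
    constructor
    · rintro ⟨m, hm⟩
      obtain ⟨e, he⟩ := Nat.even_mul_succ_self m
      have hce : c = e := by omega
      subst hce
      refine ⟨m, ?_⟩
      rw [he]
      ring
    · rintro ⟨m, hm⟩
      obtain ⟨e, he⟩ := Nat.even_mul_succ_self m
      rw [he] at hm
      have h2 : k * (e + e) = 2 * (k * e) := by ring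
      have h3 : k * c = k * e := by omega
      have h4 : c = e := Nat.eq_of_mul_eq_mul_left hk h3
      exact ⟨m, by omega⟩
  · rw [if_neg hd, if_neg]
    rintro ⟨m, hm⟩
    obtain ⟨e, he⟩ := Nat.even_mul_succ_self m
    rw [he] at hm
    have h2 : k * (e + e) = 2 * (k * e) := by ring
    exact hd ⟨e, by omega⟩

/-- `m(m+1)` is `≡ 0 (mod 3)` or of the form `9a(a+1)+2`. -/
lemma mul_succ_mod3 (m : ℕ) :
    (∃ a, m * (m + 1) = 3 * a) ∨ (∃ a, m * (m + 1) = 9 * (a * (a + 1)) + 2) := by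
  have h : m % 3 = 0 ∨ m % 3 = 1 ∨ m % 3 = 2 := by omega
  obtain h | h | h := h
  · obtain ⟨a, rfl⟩ : ∃ a, m = 3 * a := ⟨m / 3, by omega⟩
    exact Or.inl ⟨a * (3 * a + 1), by ring⟩
  · obtain ⟨a, rfl⟩ : ∃ a, m = 3 * a + 1 := ⟨m / 3, by omega⟩
    exact Or.inr ⟨a, by ring⟩
  · obtain ⟨a, rfl⟩ : ∃ a, m = 3 * a + 2 := ⟨m / 3, by omega⟩
    exact Or.inl ⟨(3 * a + 2) * (a + 1), by ring⟩

/-- Key structure lemma: if `i + j = 3n + 1` with `i, j` of the form `5·triangular`,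
then both are `≡ 2 (mod 3)` and come from `15·triangular` numbers. -/
lemma critical {i j n : ℕ} (hij : i + j = 3 * n + 1)
    (hi : ∃ m, 2 * i = 5 * (m * (m + 1))) (hj : ∃ m, 2 * j = 5 * (m * (m + 1))) :
    ∃ u v, i = 3 * u + 5 ∧ j = 3 * v + 5 ∧ (∃ m, 2 * u = 15 * (m * (m + 1))) ∧
      (∃ m, 2 * v = 15 * (m * (m + 1))) ∧ u + v + 3 = n := by
  obtain ⟨a, ha⟩ := hi
  obtain ⟨b, hb⟩ := hj
  obtain ⟨ea, hea⟩ := Nat.even_mul_succ_self a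
  obtain ⟨eb, heb⟩ := Nat.even_mul_succ_self b
  rcases mul_succ_mod3 a with ⟨c, hc⟩ | ⟨c, hc⟩ <;>
    rcases mul_succ_mod3 b with ⟨d, hd⟩ | ⟨d, hd⟩
  · omega
  · obtain ⟨f, hf⟩ := Nat.even_mul_succ_self d
    omega
  · obtain ⟨e, he⟩ := Nat.even_mul_succ_self c
    omega
  · obtain ⟨e, he⟩ := Nat.even_mul_succ_self c
    obtain ⟨f, hf⟩ := Nat.even_mul_succ_self d
    refine ⟨15 * e, 15 * f, by omega, by omega, ⟨c, by omega⟩, ⟨d, by omega⟩, by omega⟩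

/-- Converse direction: `15·triangular` numbers give rise to the relevant `5·triangular` ones. -/
lemma rev {u : ℕ} (hu : ∃ m, 2 * u = 15 * (m * (m + 1))) :
    ∃ m, 2 * (3 * u + 5) = 5 * (m * (m + 1)) := by
  obtain ⟨m, hm⟩ := hu
  refine ⟨3 * m + 1, ?_⟩
  have h2 : 5 * ((3 * m + 1) * ((3 * m + 1) + 1)) = 3 * (15 * (m * (m + 1))) + 10 := by ring
  omega

/-- The square's coefficient as a count of decompositions. -/
lemma coeff_sq_count (k N : ℕ) (hk : 0 < k) :
    PowerSeries.coeff N ((substPow k psi) ^ 2) =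
      (((antidiagonal N).filter fun p =>
          (∃ m : ℕ, 2 * p.1 = k * (m * (m + 1))) ∧
          (∃ m : ℕ, 2 * p.2 = k * (m * (m + 1)))).card : ℤ) := by
  rw [sq, PowerSeries.coeff_mul, ← Finset.sum_boole]
  refine Finset.sum_congr rfl fun p _ => ?_
  rw [coeff_substPow_psi k p.1 hk, coeff_substPow_psi k p.2 hk]
  split_ifs with h1 h2 h3 h4 h5 <;> simp_all

/-- The central combinatorial identity. -/
lemma count_eq (n : ℕ) :
    (((antidiagonal (3 * n + 1)).filter fun p =>
        (∃ m : ℕ, 2 * p.1 = 5 * (m * (m + 1))) ∧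
        (∃ m : ℕ, 2 * p.2 = 5 * (m * (m + 1)))).card : ℤ) =
      if 3 ≤ n then
        (((antidiagonal (n - 3)).filter fun p =>
            (∃ m : ℕ, 2 * p.1 = 15 * (m * (m + 1))) ∧
            (∃ m : ℕ, 2 * p.2 = 15 * (m * (m + 1)))).card : ℤ)
      else 0 := by
  by_cases hn : 3 ≤ n
  · rw [if_pos hn]
    norm_cast
    apply Finset.card_nbij' (fun p => ((p.1 - 5) / 3, (p.2 - 5) / 3))
      (fun q => (3 * q.1 + 5, 3 * q.2 + 5))
    · rintro ⟨i, j⟩ hp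
      simp only [Finset.mem_coe, Finset.mem_filter, HasAntidiagonal.mem_antidiagonal] at hp ⊢
      obtain ⟨hij, hi, hj⟩ := hp
      obtain ⟨u, v, hiu, hjv, hu, hv, huv⟩ := critical hij hi hj
      have e1 : (i - 5) / 3 = u := by omega
      have e2 : (j - 5) / 3 = v := by omega
      rw [e1, e2]
      exact ⟨by omega, hu, hv⟩
    · rintro ⟨u, v⟩ hq
      simp only [Finset.mem_coe, Finset.mem_filter, HasAntidiagonal.mem_antidiagonal] at hq ⊢
      obtain ⟨huv, hu, hv⟩ := hq
      exact ⟨by omega, rev hu, rev hv⟩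
    · rintro ⟨i, j⟩ hp
      simp only [Finset.mem_coe, Finset.mem_filter, HasAntidiagonal.mem_antidiagonal] at hp
      obtain ⟨hij, hi, hj⟩ := hp
      obtain ⟨u, v, hiu, hjv, -, -, -⟩ := critical hij hi hj
      simp only [Prod.mk.injEq]
      constructor <;> omega
    · rintro ⟨u, v⟩ _
      simp only [Prod.mk.injEq]
      constructor <;> omega
  · rw [if_neg hn]
    norm_cast
    rw [Finset.card_eq_zero, Finset.filter_eq_empty_iff]
    rintro ⟨i, j⟩ hp ⟨hi, hj⟩
    rw [HasAntidiagonal.mem_antidiagonal] at hp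
    obtain ⟨u, v, -, -, -, -, huv⟩ := critical hp hi hj
    omega

/-- Coefficient identity: `coeff_{3n+2}(2q ψ(q^5)^2) = coeff_n (2q^3 ψ(q^15)^2)`. -/
lemma coeff_shift (n : ℕ) :
    PowerSeries.coeff (3 * n + 2) (2 * (X : PowerSeries ℤ) * (substPow 5 psi) ^ 2) =
      PowerSeries.coeff n (2 * (X : PowerSeries ℤ) ^ 3 * (substPow 15 psi) ^ 2) := by
  have e1 : (2 : PowerSeries ℤ) * X * (substPow 5 psi) ^ 2 =
      X * (2 * (substPow 5 psi) ^ 2) := by ring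
  have e2 : (2 : PowerSeries ℤ) * X ^ 3 * (substPow 15 psi) ^ 2 =
      X ^ 3 * (2 * (substPow 15 psi) ^ 2) := by ring
  rw [e1, e2, show 3 * n + 2 = (3 * n + 1) + 1 from rfl, PowerSeries.coeff_succ_X_mul,
    PowerSeries.coeff_X_pow_mul']
  have hl : PowerSeries.coeff (3 * n + 1) (2 * (substPow 5 psi) ^ 2) =
      2 * PowerSeries.coeff (3 * n + 1) ((substPow 5 psi) ^ 2) := by
    rw [two_mul, two_mul, map_add]
  rw [hl, coeff_sq_count 5 (3 * n + 1) (by norm_num), count_eq]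
  by_cases hn : 3 ≤ n
  · rw [if_pos hn, if_pos hn]
    have hr : PowerSeries.coeff (n - 3) (2 * (substPow 15 psi) ^ 2) =
        2 * PowerSeries.coeff (n - 3) ((substPow 15 psi) ^ 2) := by
      rw [two_mul, two_mul, map_add]
    rw [hr, coeff_sq_count 15 (n - 3) (by norm_num)]
  · rw [if_neg hn, if_neg hn, mul_zero]

theorem delta2_9n7_from_3n1
    (h : ∀ n : ℕ, (3 : ℤ) ∣ (Δ 2 (3 * n + 1) -
      PowerSeries.coeff n (2 * (X : PowerSeries ℤ) * (substPow 5 psi) ^ 2))) :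
    ∀ n : ℕ, (3 : ℤ) ∣ (Δ 2 (9 * n + 7) -
      PowerSeries.coeff n (2 * (X : PowerSeries ℤ) ^ 3 * (substPow 15 psi) ^ 2)) := by
  intro n
  have h1 := h (3 * n + 2)
  have e : 3 * (3 * n + 2) + 1 = 9 * n + 7 := by ring
  rw [e, coeff_shift n] at h1
  exact h1
end
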